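/- Let X and X_c be real Hilbert spaces, m ∈ ℕ, D ⊆ X a linear subspace, and let 𝔄 : D → X and 𝔅, ℭ : D → ℝ^m be linear maps satisfying ⟨𝔄x, x⟩_X ≤ ⟨𝔅x, ℭx⟩_{ℝ^m} for all x ∈ D. Let M_c : X_c × ℝ^m → Set (X_c × ℝ^m) be a dissipative set-valued map. Define 𝒜 : X × X_c → Set (X × X_c) by 𝒜(x, x_c) := { (𝔄x, z_c) : x ∈ D and (z_c, 𝔅x) ∈ M_c(x_c, ℭx) }. Then 𝒜 is dissipative on the product Hilbert space X × X_c: for all (x, x_c), (x̃, x̃_c) in the domain of 𝒜 and (𝔄x, z_c) ∈ 𝒜(x, x_c), (𝔄x̃, z̃_c) ∈ 𝒜(x̃, x̃_c), one has ⟨𝔄x − 𝔄x̃, x − x̃⟩_X + ⟨z_c − z̃_c, x_c − x̃_c⟩_{X_c} ≤ 0. -/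
import Mathlib

open scoped RealInnerProductSpace

/-- dissipativity part of the proof of Theorem 6.2.
The feedback interconnection `u_c = ℭx`, `𝔅x = -y_c` of an impedance passive system with a
dissipative controller `M_c` is dissipative on the product Hilbert space `X × X_c`. -/
theorem stmt_13 {X Xc : Type*}
    [NormedAddCommGroup X] [InnerProductSpace ℝ X]
    [NormedAddCommGroup Xc] [InnerProductSpace ℝ Xc]
    (m : ℕ) (D : Submodule ℝ X)
    (Aop : D →ₗ[ℝ] X) (Bop Cop : D →ₗ[ℝ] EuclideanSpace ℝ (Fin m))
    (hpass : ∀ x : D, ⟪Aop x, (x : X)⟫ ≤ ⟪Bop x, Cop x⟫)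
    (Mc : Xc × EuclideanSpace ℝ (Fin m) → Set (Xc × EuclideanSpace ℝ (Fin m)))
    (hMc : ∀ p p' q q', q ∈ Mc p → q' ∈ Mc p' →
      ⟪q.1 - q'.1, p.1 - p'.1⟫ + ⟪q.2 - q'.2, p.2 - p'.2⟫ ≤ 0) :
    ∀ (x x' : D) (xc xc' : Xc) (zc zc' : Xc),
      (zc, Bop x) ∈ Mc (xc, Cop x) → (zc', Bop x') ∈ Mc (xc', Cop x') →
      ⟪Aop x - Aop x', (x : X) - (x' : X)⟫ + ⟪zc - zc', xc - xc'⟫ ≤ 0 := by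
  intro x x' xc xc' zc zc' h1 h2
  have hp := hpass (x - x')
  have hm := hMc (xc, Cop x) (xc', Cop x') (zc, Bop x) (zc', Bop x') h1 h2
  simp only [map_sub, Submodule.coe_sub] at hp
  simp only at hm
  have e1 : ⟪Bop x - Bop x', Cop x - Cop x'⟫ =
      ⟪Bop x - Bop x', (Cop x : EuclideanSpace ℝ (Fin m)) - Cop x'⟫ := rfl
  nlinarith [hp, hm, real_inner_comm (Bop x - Bop x') ((Cop x : EuclideanSpace ℝ (Fin m)) - Cop x')]
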